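/- Let h : (x₀,∞) → (0,∞) be regularly varying at infinity with index -1 and integrable at infinity. Then the function g(x) = ∫ₓ^∞ h(u) du is slowly varying and ∫ₓ^∞ h(u) du / (x·h(x)) → ∞ as x → ∞. -/

import Mathlib

open MeasureTheory Set Filter Real

private lemma lint_inv_top : ∫⁻ t in Set.Ioi (1:ℝ), ENNReal.ofReal t⁻¹ = ⊤ := by
  by_contra hfin
  have hmeas : AEStronglyMeasurable (fun t : ℝ => t⁻¹) (volume.restrict (Ioi 1)) :=
    measurable_inv.aestronglyMeasurable
  have : IntegrableOn (fun t : ℝ => t⁻¹) (Ioi 1) := by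
    refine ⟨hmeas, ?_⟩
    rw [hasFiniteIntegral_iff_ofReal]
    · exact lt_top_iff_ne_top.2 hfin
    · filter_upwards [ae_restrict_mem measurableSet_Ioi] with t ht
      exact inv_nonneg.2 (by linarith [mem_Ioi.1 ht])
  exact not_IntegrableOn_Ioi_inv this

private lemma key_int {h : ℝ → ℝ} {x₀ : ℝ}
    (hint : MeasureTheory.IntegrableOn h (Set.Ioi x₀)) {x : ℝ}
    (hx0 : 0 < x) (hxx : x₀ < x) :
    IntegrableOn (fun t => h (x * t)) (Ioi (1:ℝ)) := by
  refine (integrableOn_Ioi_comp_mul_left_iff h 1 hx0).2 ?_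
  rw [mul_one]
  exact hint.mono (Ioi_subset_Ioi hxx.le) le_rfl

private lemma key_eq {h : ℝ → ℝ} {x₀ : ℝ} (hpos : ∀ x > x₀, 0 < h x)
    (hint : MeasureTheory.IntegrableOn h (Set.Ioi x₀)) {x : ℝ}
    (hx0 : 0 < x) (hxx : x₀ < x) :
    ∫⁻ t in Set.Ioi (1:ℝ), ENNReal.ofReal (h (x * t) / h x)
      = ENNReal.ofReal ((∫ u in Set.Ioi x, h u) / (x * h x)) := by
  have hhx : 0 < h x := hpos x hxx
  have hI2 : IntegrableOn (fun t => h (x * t) / h x) (Ioi (1:ℝ)) :=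
    (key_int hint hx0 hxx).div_const _
  have hnn : 0 ≤ᵐ[volume.restrict (Ioi (1:ℝ))] fun t => h (x * t) / h x := by
    filter_upwards [ae_restrict_mem measurableSet_Ioi] with t ht
    have h1t : (1:ℝ) < t := ht
    have : x₀ < x * t := by nlinarith
    exact div_nonneg (hpos _ this).le hhx.le
  rw [← MeasureTheory.ofReal_integral_eq_lintegral_ofReal hI2 hnn]
  congr 1
  rw [integral_div, integral_comp_mul_left_Ioi h 1 hx0, mul_one, smul_eq_mul]
  field_simp

private lemma karamata_part2 {h : ℝ → ℝ} {x₀ : ℝ}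
    (hpos : ∀ x > x₀, 0 < h x)
    (hrv : ∀ lam > 0, Filter.Tendsto (fun x => h (lam * x) / h x) Filter.atTop
      (nhds (lam ^ (-1 : ℝ))))
    (hint : MeasureTheory.IntegrableOn h (Set.Ioi x₀)) :
    Filter.Tendsto (fun x => (∫ u in Set.Ioi x, h u) / (x * h x))
      Filter.atTop Filter.atTop := by
  rw [tendsto_atTop]
  intro M
  by_contra hcon
  rw [Filter.not_eventually] at hcon
  have hseq : ∀ n : ℕ, ∃ x : ℝ, max x₀ 0 + 1 + n ≤ x ∧
      (∫ u in Set.Ioi x, h u) / (x * h x) < M := by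
    intro n
    rcases Filter.frequently_atTop.1 hcon (max x₀ 0 + 1 + n) with ⟨x, hx1, hx2⟩
    exact ⟨x, hx1, lt_of_not_ge hx2⟩
  choose xs hxs1 hxs2 using hseq
  have hxgood : ∀ n, max x₀ 0 + 1 ≤ xs n := by
    intro n
    have := hxs1 n
    have : (0:ℝ) ≤ n := Nat.cast_nonneg n
    linarith [hxs1 n]
  have hx0 : ∀ n, 0 < xs n := fun n => by
    have := le_max_right x₀ 0; linarith [hxgood n]
  have hxx : ∀ n, x₀ < xs n := fun n => by
    have := le_max_left x₀ 0; linarith [hxgood n]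
  have hxtop : Tendsto xs atTop atTop := by
    refine tendsto_atTop_mono hxs1 ?_
    exact tendsto_atTop_add_const_left _ _ tendsto_natCast_atTop_atTop
  set f : ℕ → ℝ → ENNReal := fun n t => ENNReal.ofReal (h (xs n * t) / h (xs n)) with hf
  have hmeas : ∀ n, AEMeasurable (f n) (volume.restrict (Ioi (1:ℝ))) := by
    intro n
    exact ENNReal.measurable_ofReal.comp_aemeasurable
      (((key_int hint (hx0 n) (hxx n)).div_const _).aestronglyMeasurable.aemeasurable)
  have fatou := MeasureTheory.lintegral_liminf_le' hmeas (u := atTop) (μ := volume.restrict (Ioi (1:ℝ)))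
  have hlhs : ∫⁻ t in Set.Ioi (1:ℝ), Filter.liminf (fun n => f n t) Filter.atTop = ⊤ := by
    have : ∫⁻ t in Set.Ioi (1:ℝ), Filter.liminf (fun n => f n t) Filter.atTop
        = ∫⁻ t in Set.Ioi (1:ℝ), ENNReal.ofReal t⁻¹ := by
      refine setLIntegral_congr_fun measurableSet_Ioi (fun t ht => ?_)
      have ht1 : (1:ℝ) < t := ht
      have htend : Tendsto (fun n => h (t * xs n) / h (xs n)) atTop (nhds (t ^ (-1:ℝ))) :=
        (hrv t (by linarith)).comp hxtop
      have htend2 : Tendsto (fun n => f n t) atTop (nhds (ENNReal.ofReal t⁻¹)) := by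
        rw [← Real.rpow_neg_one t] at *
        have := (ENNReal.continuous_ofReal.tendsto _).comp htend
        simpa [f, Function.comp_def, mul_comm] using this
      exact htend2.liminf_eq
    rw [this, lint_inv_top]
  have hrhs : Filter.liminf (fun n => ∫⁻ t in Set.Ioi (1:ℝ), f n t) Filter.atTop
      ≤ ENNReal.ofReal M := by
    refine liminf_le_of_frequently_le' (Frequently.of_forall fun n => ?_)
    rw [key_eq hpos hint (hx0 n) (hxx n)]
    exact ENNReal.ofReal_le_ofReal (hxs2 n).le
  rw [hlhs] at fatou
  exact (lt_irrefl ⊤ (lt_of_le_of_lt (fatou.trans hrhs) ENNReal.ofReal_lt_top))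

private lemma gsplit {h : ℝ → ℝ} {x₀ : ℝ}
    (hint : MeasureTheory.IntegrableOn h (Set.Ioi x₀)) {a b : ℝ}
    (ha : x₀ < a) (hab : a ≤ b) :
    ∫ u in Set.Ioi a, h u = (∫ u in Set.Ioc a b, h u) + ∫ u in Set.Ioi b, h u := by
  rw [← Set.Ioc_union_Ioi_eq_Ioi hab]
  exact MeasureTheory.setIntegral_union Set.Ioc_disjoint_Ioi_same measurableSet_Ioi
    (hint.mono (fun u hu => lt_trans ha hu.1) le_rfl)
    (hint.mono (Set.Ioi_subset_Ioi (by linarith)) le_rfl)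

private lemma gmono {h : ℝ → ℝ} {x₀ : ℝ} (hpos : ∀ x > x₀, 0 < h x)
    (hint : MeasureTheory.IntegrableOn h (Set.Ioi x₀)) {a b : ℝ}
    (ha : x₀ < a) (hab : a ≤ b) :
    ∫ u in Set.Ioi b, h u ≤ ∫ u in Set.Ioi a, h u := by
  rw [gsplit hint ha hab]
  have : 0 ≤ ∫ u in Set.Ioc a b, h u :=
    setIntegral_nonneg measurableSet_Ioc (fun u hu => (hpos u (lt_trans ha hu.1)).le)
  linarith

private lemma gpos {h : ℝ → ℝ} {x₀ : ℝ} (hpos : ∀ x > x₀, 0 < h x)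
    (hint : MeasureTheory.IntegrableOn h (Set.Ioi x₀)) {a : ℝ} (ha : x₀ < a) :
    0 < ∫ u in Set.Ioi a, h u := by
  have hIa : IntegrableOn h (Ioi a) := hint.mono (Ioi_subset_Ioi ha.le) le_rfl
  rw [setIntegral_pos_iff_support_of_nonneg_ae ?nn hIa]
  · refine lt_of_lt_of_le ?_ (measure_mono (s := Set.Ioi a) ?_)
    · simp [Real.volume_Ioi]
    · intro u hu
      exact ⟨(hpos u (lt_trans ha hu)).ne', hu⟩
  case nn =>
    filter_upwards [ae_restrict_mem measurableSet_Ioi] with u hu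
    exact (hpos u (lt_trans ha hu)).le

private lemma karamata_part1_ge {h : ℝ → ℝ} {x₀ : ℝ}
    (hpos : ∀ x > x₀, 0 < h x)
    (hint : MeasureTheory.IntegrableOn h (Set.Ioi x₀))
    (part2 : Filter.Tendsto (fun x => (∫ u in Set.Ioi x, h u) / (x * h x))
      Filter.atTop Filter.atTop)
    {lam : ℝ} (hlam : 1 ≤ lam) :
    Filter.Tendsto (fun x => (∫ u in Set.Ioi (lam * x), h u) / ∫ u in Set.Ioi x, h u)
      Filter.atTop (nhds 1) := by
  rw [Metric.tendsto_nhds]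
  intro ε hε
  have hlog : 0 ≤ Real.log lam := Real.log_nonneg hlam
  set δ := ε / (Real.log lam + 1) with hδ
  have hδpos : 0 < δ := div_pos hε (by linarith)
  have hb : ∀ᶠ u in Filter.atTop, u * h u ≤ δ * ∫ v in Set.Ioi u, h v := by
    have h1 : ∀ᶠ u in Filter.atTop, δ⁻¹ ≤ (∫ v in Set.Ioi u, h v) / (u * h u) :=
      part2.eventually_ge_atTop δ⁻¹
    filter_upwards [h1, eventually_gt_atTop (max x₀ 0)] with u hu hub
    have hu0 : 0 < u := lt_of_le_of_lt (le_max_right _ _) hub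
    have hux : x₀ < u := lt_of_le_of_lt (le_max_left _ _) hub
    have huh : 0 < u * h u := mul_pos hu0 (hpos u hux)
    have h2 := (le_div_iff₀ huh).1 hu
    have h3 : δ * (δ⁻¹ * (u * h u)) ≤ δ * ∫ v in Set.Ioi u, h v :=
      mul_le_mul_of_nonneg_left h2 hδpos.le
    calc u * h u = δ * (δ⁻¹ * (u * h u)) := by field_simp
    _ ≤ δ * ∫ v in Set.Ioi u, h v := h3
  rcases eventually_atTop.1 hb with ⟨X, hX⟩
  filter_upwards [eventually_ge_atTop X, eventually_gt_atTop (max x₀ 0)] with x hxX hxm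
  have hx0 : 0 < x := lt_of_le_of_lt (le_max_right _ _) hxm
  have hxx : x₀ < x := lt_of_le_of_lt (le_max_left _ _) hxm
  have hle : x ≤ lam * x := by nlinarith
  have hgpos : 0 < ∫ u in Set.Ioi x, h u := gpos hpos hint hxx
  have hglam : ∫ u in Set.Ioi (lam * x), h u ≤ ∫ u in Set.Ioi x, h u :=
    gmono hpos hint hxx hle
  have hsplit := gsplit hint hxx hle
  have hIoc : IntegrableOn h (Ioc x (lam * x)) :=
    hint.mono (fun u hu => lt_trans hxx hu.1) le_rfl
  have hrhsint : IntegrableOn (fun u => δ * (∫ v in Set.Ioi x, h v) * u⁻¹)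
      (Ioc x (lam * x)) := by
    refine (ContinuousOn.integrableOn_Icc ?_).mono Set.Ioc_subset_Icc_self le_rfl
    refine continuousOn_const.mul (ContinuousOn.inv₀ continuousOn_id ?_)
    exact fun u hu => ne_of_gt (lt_of_lt_of_le hx0 hu.1)
  have hmono : ∫ u in Set.Ioc x (lam * x), h u
      ≤ ∫ u in Set.Ioc x (lam * x), δ * (∫ v in Set.Ioi x, h v) * u⁻¹ := by
    refine setIntegral_mono_on hIoc hrhsint measurableSet_Ioc (fun u hu => ?_)
    have hu0 : 0 < u := lt_trans hx0 hu.1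
    have huX : X ≤ u := le_trans hxX hu.1.le
    have h1 : u * h u ≤ δ * ∫ v in Set.Ioi u, h v := hX u huX
    have h2 : ∫ v in Set.Ioi u, h v ≤ ∫ v in Set.Ioi x, h v :=
      gmono hpos hint hxx hu.1.le
    have h3 : u * h u ≤ δ * ∫ v in Set.Ioi x, h v := by nlinarith
    calc h u = u * h u * u⁻¹ := by field_simp
    _ ≤ δ * (∫ v in Set.Ioi x, h v) * u⁻¹ :=
      mul_le_mul_of_nonneg_right h3 (inv_nonneg.2 hu0.le)
  have hval : ∫ u in Set.Ioc x (lam * x), δ * (∫ v in Set.Ioi x, h v) * u⁻¹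
      = δ * (∫ v in Set.Ioi x, h v) * Real.log lam := by
    rw [← intervalIntegral.integral_of_le hle, intervalIntegral.integral_const_mul,
      integral_inv (by
        intro hmem
        rcases Set.mem_uIcc.1 hmem with ⟨h1, _⟩ | ⟨_, h2⟩
        · linarith
        · nlinarith)]
    have hxl : lam * x / x = lam := by field_simp
    rw [hxl]
  have hIocpos : 0 ≤ ∫ u in Set.Ioc x (lam * x), h u :=
    setIntegral_nonneg measurableSet_Ioc (fun u hu => (hpos u (lt_trans hxx hu.1)).le)
  have hkey : (∫ u in Set.Ioi x, h u) - (∫ u in Set.Ioi (lam * x), h u)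
      ≤ δ * (∫ v in Set.Ioi x, h v) * Real.log lam := by
    have h5 := hmono.trans (le_of_eq hval)
    linarith [hsplit]
  have hδε : δ * Real.log lam < ε := by
    rw [hδ, div_mul_eq_mul_div, div_lt_iff₀ (by linarith)]
    nlinarith
  have hratio : ((∫ u in Set.Ioi x, h u) - ∫ u in Set.Ioi (lam * x), h u)
      / (∫ u in Set.Ioi x, h u) ≤ δ * Real.log lam := by
    rw [div_le_iff₀ hgpos]
    calc (∫ u in Set.Ioi x, h u) - ∫ u in Set.Ioi (lam * x), h u
        ≤ δ * (∫ v in Set.Ioi x, h v) * Real.log lam := hkey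
    _ = δ * Real.log lam * ∫ u in Set.Ioi x, h u := by ring
  rw [Real.dist_eq, abs_of_nonpos (by
    rw [sub_nonpos, div_le_one hgpos]; exact hglam), neg_sub]
  have heq : 1 - (∫ u in Set.Ioi (lam * x), h u) / ∫ u in Set.Ioi x, h u
      = ((∫ u in Set.Ioi x, h u) - ∫ u in Set.Ioi (lam * x), h u) / ∫ u in Set.Ioi x, h u := by
    field_simp
  rw [heq]
  linarith

theorem karamata_index_neg_one (h : ℝ → ℝ) (x₀ : ℝ)
    (hpos : ∀ x > x₀, 0 < h x)
    (hrv : ∀ lam > 0, Filter.Tendsto (fun x => h (lam * x) / h x) Filter.atTop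
      (nhds (lam ^ (-1 : ℝ))))
    (hint : MeasureTheory.IntegrableOn h (Set.Ioi x₀)) :
    (∀ lam > 0, Filter.Tendsto
      (fun x => (∫ u in Set.Ioi (lam * x), h u) / ∫ u in Set.Ioi x, h u)
      Filter.atTop (nhds 1)) ∧
    Filter.Tendsto (fun x => (∫ u in Set.Ioi x, h u) / (x * h x))
      Filter.atTop Filter.atTop := by
  have part2 := karamata_part2 hpos hrv hint
  refine ⟨fun lam hlam => ?_, part2⟩
  rcases le_or_gt 1 lam with hl | hl
  · exact karamata_part1_ge hpos hint part2 hl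
  · have hinv : (1:ℝ) ≤ 1 / lam := (le_div_iff₀ hlam).2 (by linarith)
    have hmul : Filter.Tendsto (fun x => lam * x) Filter.atTop Filter.atTop :=
      Filter.tendsto_id.const_mul_atTop hlam
    have hcomp := (karamata_part1_ge hpos hint part2 hinv).comp hmul
    have hinv2 := hcomp.inv₀ one_ne_zero
    rw [inv_one] at hinv2
    refine hinv2.congr (fun x => ?_)
    have hx : (1 / lam) * (lam * x) = x := by field_simp
    simp only [Function.comp, hx, inv_div]
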